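/- Let S ⊆ [m, M] ⊆ (0, ∞) be a nonempty compact set of real numbers with m = min S > 0 and M = max S ≤ 1. For every λ with 1/2 ≤ λ ≤ (1+m)/2, there exist continuous functions v₁, v₂ : S → ℂ with |v₁(s)| = |v₂(s)| = 1 for all s ∈ S (i.e., unitaries in C(S)) such that s = λ·v₁(s) + (1−λ)·v₂(s) for all s ∈ S. -/

import Mathlib

theorem stmt_2 (S : Set ℝ) (hS : IsCompact S) (hne : S.Nonempty) (m : ℝ) (hm0 : 0 < m)
    (hmin : IsLeast S m) (hmax : ∀ s ∈ S, s ≤ 1)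
    (lam : ℝ) (hl1 : 1 / 2 ≤ lam) (hl2 : lam ≤ (1 + m) / 2) :
    ∃ v₁ v₂ : C(S, ℂ), (∀ s, ‖v₁ s‖ = 1) ∧ (∀ s, ‖v₂ s‖ = 1) ∧
      ∀ s : S, ((s : ℝ) : ℂ) = lam * v₁ s + (1 - lam) * v₂ s := by
  have hm1 : m ≤ 1 := hmax m hmin.1
  by_cases hlam : lam = 1
  · refine ⟨1, 1, ?_, ?_, ?_⟩
    · intro s; simp
    · intro s; simp
    · intro s
      have hm : (1:ℝ) ≤ m := by linarith
      have h1 : (s:ℝ) = 1 := le_antisymm (hmax s s.2) (le_trans hm (hmin.2 s.2))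
      rw [h1]; simp [hlam]
  · have hlam1 : lam ≤ 1 := by linarith
    have hμ : 0 < 1 - lam := lt_of_le_of_ne (by linarith) (fun h => hlam (by linarith [h]))
    have hlam0 : 0 < lam := by linarith
    have hts : ∀ s : S, 0 < (s:ℝ) := fun s => lt_of_lt_of_le hm0 (hmin.2 s.2)
    set μ := 1 - lam with hμdef
    set a : S → ℝ := fun s => ((s:ℝ)^2 + (2*lam - 1)) / (2*lam*(s:ℝ)) with ha
    set g : S → ℝ := fun s => ((s:ℝ)^2 - (2*lam - 1)) / (2*μ*(s:ℝ)) with hg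
    set b : S → ℝ := fun s => Real.sqrt (1 - a s ^ 2) with hb
    set d : S → ℝ := fun s => -(lam/μ) * b s with hd
    have hca : Continuous a := by
      apply Continuous.div
      · fun_prop
      · fun_prop
      · intro s; have := hts s; positivity
    have hcg : Continuous g := by
      apply Continuous.div
      · fun_prop
      · fun_prop
      · intro s; have := hts s; positivity
    have hcb : Continuous b := by fun_prop
    have hcd : Continuous d := by fun_prop
    -- pointwise facts
    have ha2 : ∀ s : S, a s ^ 2 ≤ 1 := by
      intro s
      have ht0 := hts s
      have ht1 : m ≤ (s:ℝ) := hmin.2 s.2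
      have ht2 : (s:ℝ) ≤ 1 := hmax s s.2
      have hΔ : 2*lam - 1 ≤ m := by linarith
      have hnum : ((s:ℝ)^2 + (2*lam - 1))^2 ≤ (2*lam*(s:ℝ))^2 := by
        nlinarith [mul_nonneg (sub_nonneg.2 ht2) (by linarith : (0:ℝ) ≤ (s:ℝ) - (2*lam-1)),
          sq_nonneg ((s:ℝ) + 2*lam - 1), sq_nonneg ((s:ℝ) - 1)]
      have hden : (0:ℝ) < (2*lam*(s:ℝ))^2 := by positivity
      rw [ha]
      rw [div_pow, div_le_one hden]
      exact hnum
    have hb2 : ∀ s : S, b s ^ 2 = 1 - a s ^ 2 := fun s =>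
      Real.sq_sqrt (by linarith [ha2 s])
    have hid : ∀ s : S, lam^2 * (1 - a s ^ 2) = μ^2 * (1 - g s ^ 2) := by
      intro s
      have ht0 := (hts s).ne'
      rw [ha, hg, hμdef]
      field_simp
      ring
    have hd2 : ∀ s : S, d s ^ 2 = 1 - g s ^ 2 := by
      intro s
      have h1 : d s ^ 2 = lam^2 * (1 - a s ^ 2) / μ^2 := by
        rw [hd]
        have := hb2 s
        field_simp
        nlinarith [hb2 s]
      rw [h1, hid s]
      field_simp
    have hre : ∀ s : S, lam * a s + μ * g s = (s:ℝ) := by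
      intro s
      have ht0 := (hts s).ne'
      rw [ha, hg]
      field_simp
      ring
    have him : ∀ s : S, lam * b s + μ * d s = 0 := by
      intro s
      rw [hd]
      field_simp
      ring
    refine ⟨⟨fun s => (a s : ℂ) + (b s : ℂ) * Complex.I, by fun_prop⟩,
            ⟨fun s => (g s : ℂ) + (d s : ℂ) * Complex.I, by fun_prop⟩, ?_, ?_, ?_⟩
    · intro s
      simp only [ContinuousMap.coe_mk]
      rw [Complex.norm_add_mul_I]
      rw [hb2 s]
      simp
    · intro s
      simp only [ContinuousMap.coe_mk]
      rw [Complex.norm_add_mul_I]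
      rw [hd2 s]
      simp
    · intro s
      simp only [ContinuousMap.coe_mk]
      rw [show (1 - lam : ℂ) = (μ : ℂ) by rw [hμdef]; push_cast; ring]
      rw [Complex.ext_iff]
      constructor
      · simpa using (hre s).symm
      · simpa using (him s).symm
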